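/- Let P be a finite preordered set and E a k-linear representation of P with all E_x finite dimensional. Then E admits a finite free resolution: there is an exact sequence 0 → F_n → ⋯ → F_0 → E → 0 where each F_i is a finite direct sum of representations of the form F^{x} for x ∈ P. -/

import Mathlib

open Classical

/-- The degree-`y` component of a finite direct sum of free representations `⨁_j F^{c j}`:
functions on `{j // c j ≤ y}` with values in `k`. -/
abbrev FreeSumObj (k : Type*) {P : Type*} [Preorder P] {μ : Type*} (c : μ → P) (y : P) :
    Type _ := {j : μ // c j ≤ y} → k

/-- The transition map of the direct sum of free representations `⨁_j F^{c j}` along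
`y ≤ z`: extension by zero of the canonical inclusion `{j // c j ≤ y} ⊆ {j // c j ≤ z}`. -/
noncomputable def FreeSumMap (k : Type*) [Field k] {P : Type*} [Preorder P] {μ : Type*}
    (c : μ → P) {y z : P} (h : y ≤ z) : FreeSumObj k c y →ₗ[k] FreeSumObj k c z where
  toFun f := fun j => if h' : c j.1 ≤ y then f ⟨j.1, h'⟩ else 0
  map_add' f g := by funext j; by_cases h' : c j.1 ≤ y <;> simp [h']
  map_smul' a f := by funext j; by_cases h' : c j.1 ≤ y <;> simp [h']

namespace FFR

variable {k : Type u} [Field k] {P : Type v} [Preorder P]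

theorem FSM_apply {μ : Type w} (c : μ → P) {y z : P} (h : y ≤ z) (g : FreeSumObj k c y)
    (j : {j : μ // c j ≤ z}) :
    FreeSumMap k c h g j = if h' : c j.1 ≤ y then g ⟨j.1, h'⟩ else 0 := rfl

theorem FSM_id {μ : Type w} (c : μ → P) (y : P) :
    FreeSumMap k c (le_refl y) = (LinearMap.id : FreeSumObj k c y →ₗ[k] FreeSumObj k c y) := by
  ext g j
  simp [FSM_apply, j.2]

theorem FSM_comp {μ : Type w} (c : μ → P) {x y z : P} (h1 : x ≤ y) (h2 : y ≤ z) :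
    (FreeSumMap k c h2).comp (FreeSumMap k c h1) = FreeSumMap k c (h1.trans h2) := by
  ext g j
  by_cases hx : c j.1 ≤ x
  · simp [FSM_apply, hx, hx.trans h1]
  · by_cases hy : c j.1 ≤ y <;> simp [FSM_apply, hx, hy]

structure Rep (k : Type u) [Field k] (P : Type v) [Preorder P] where
  V : P → Type u
  [acg : ∀ x, AddCommGroup (V x)]
  [mod : ∀ x, Module k (V x)]
  [fd : ∀ x, FiniteDimensional k (V x)]
  map : ∀ {x y : P}, x ≤ y → (V x →ₗ[k] V y)
  map_id : ∀ x : P, map (le_refl x) = LinearMap.id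
  map_comp : ∀ {x y z : P} (h1 : x ≤ y) (h2 : y ≤ z),
      (map h2).comp (map h1) = map (h1.trans h2)

attribute [instance] Rep.acg Rep.mod Rep.fd

variable [Fintype P]

/-- height of `x` : number of elements strictly below `x`. -/
noncomputable def ht (x : P) : ℕ := (Finset.univ.filter fun z => z ≤ x ∧ ¬ x ≤ z).card

theorem ht_lt {z x : P} (h1 : z ≤ x) (h2 : ¬ x ≤ z) : ht z < ht x := by
  apply Finset.card_lt_card
  constructor
  · intro w hw
    simp only [Finset.mem_filter, Finset.mem_univ, true_and] at hw ⊢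
    exact ⟨hw.1.trans h1, fun hc => hw.2 (h1.trans hc)⟩
  · intro hsub
    have := hsub (by simp [h1, h2] : z ∈ Finset.univ.filter fun w => w ≤ x ∧ ¬ x ≤ w)
    simp at this

theorem ht_lt_card (x : P) : ht x < Fintype.card P := by
  apply Finset.card_lt_card
  rw [Finset.ssubset_univ_iff]
  intro hc
  have := hc ▸ Finset.mem_univ x
  simp at this

/-- a choice of representative of the equivalence class of `x`. -/
noncomputable def r (x : P) : P := (Quotient.mk (AntisymmRel.setoid P (· ≤ ·)) x).out

theorem r_le (x : P) : r x ≤ x ∧ x ≤ r x := by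
  have h := Quotient.mk_out (s := AntisymmRel.setoid P (· ≤ ·)) x
  exact ⟨h.1, h.2⟩

theorem r_eq {x y : P} (h1 : x ≤ y) (h2 : y ≤ x) : r x = r y :=
  congrArg Quotient.out (Quotient.sound ⟨h1, h2⟩)

theorem r_idem (x : P) : r (r x) = r x := r_eq (r_le x).1 (r_le x).2

/-- linear combination of a finite family. -/
noncomputable def lc {γ : Type w} [Fintype γ] {M : Type u} [AddCommGroup M] [Module k M]
    (v : γ → M) : (γ → k) →ₗ[k] M where
  toFun g := ∑ j, g j • v j
  map_add' f g := by simp [add_smul, Finset.sum_add_distrib]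
  map_smul' a g := by simp [smul_smul, Finset.smul_sum]

@[simp] theorem lc_apply {γ : Type w} [Fintype γ] {M : Type u} [AddCommGroup M] [Module k M]
    (v : γ → M) (g : γ → k) : lc v g = ∑ j, g j • v j := rfl

theorem lc_single {γ : Type w} [Fintype γ] [DecidableEq γ] {M : Type u} [AddCommGroup M]
    [Module k M] (v : γ → M) (j0 : γ) (a : k) : lc v (Pi.single j0 a) = a • v j0 := by
  rw [lc_apply, Finset.sum_eq_single j0]
  · simp
  · intro b _ hb; simp [Pi.single_apply, hb]
  · simp

theorem sum_dite_subtype {γ : Type w} [Fintype γ] {p q : γ → Prop} (hpq : ∀ j, p j → q j)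
    {M : Type u} [AddCommGroup M] [Module k M] (G : {j // p j} → M) :
    ∑ j : {j // q j}, (if h : p j.1 then G ⟨j.1, h⟩ else 0) = ∑ j : {j // p j}, G j := by
  classical
  set f : γ → M := fun j => if h : p j then G ⟨j, h⟩ else 0 with hfdef
  have h1 : (∑ j : {j // q j}, (if h : p j.1 then G ⟨j.1, h⟩ else 0))
      = ∑ j ∈ Finset.univ.filter q, f j :=
    (Finset.sum_subtype (p := q) (Finset.univ.filter q) (fun x => by simp) f).symm
  have h2 : (∑ j ∈ Finset.univ.filter p, f j) = ∑ j : {j // p j}, G j := by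
    rw [Finset.sum_subtype (p := p) (Finset.univ.filter p) (fun x => by simp) f]
    exact Finset.sum_congr rfl (fun j _ => by
      show f j.1 = G j
      rw [hfdef]
      exact dif_pos j.2)
  rw [h1, ← h2]
  refine (Finset.sum_subset ?_ ?_).symm
  · intro x hx
    simp only [Finset.mem_filter, Finset.mem_univ, true_and] at hx ⊢
    exact hpq x hx
  · intro x _ hx
    simp only [Finset.mem_filter, Finset.mem_univ, true_and] at hx
    rw [hfdef]
    exact dif_neg hx

section CoverConstr

variable (E : Rep k P)

/-- the submodule generated by everything strictly below `x`. -/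
noncomputable def Below (x : P) : Submodule k (E.V x) :=
  ⨆ z : {z : P // z ≤ x ∧ ¬ x ≤ z}, LinearMap.range (E.map z.2.1)

/-- a complement of `Below`. -/
noncomputable def Wc (x : P) : Submodule k (E.V x) :=
  (Submodule.exists_isCompl (Below E x)).choose

theorem isCompl_Wc (x : P) : IsCompl (Below E x) (Wc E x) :=
  (Submodule.exists_isCompl (Below E x)).choose_spec

noncomputable def nW (x : P) : ℕ := Module.finrank k ↥(Wc E x)

noncomputable def bas (x : P) : Module.Basis (Fin (nW E x)) k ↥(Wc E x) :=
  Module.finBasis k ↥(Wc E x)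

/-- index type of the canonical cover: for each representative `x`, a basis of a
complement of `Below x`. -/
def gIdx : Type v := Σ x : {x : P // r x = x}, Fin (nW E x.1)

noncomputable instance : Fintype (gIdx E) := by
  unfold gIdx; infer_instance

def gc (j : gIdx E) : P := j.1.1

noncomputable def gv (j : gIdx E) : E.V (gc E j) :=
  ((bas E j.1.1 j.2 : ↥(Wc E j.1.1)) : E.V j.1.1)

theorem gv_ne (j : gIdx E) : gv E j ≠ 0 := by
  intro h
  exact Module.Basis.ne_zero (bas E j.1.1) j.2 (Submodule.coe_eq_zero.mp h)

/-- the canonical cover map. -/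
noncomputable def eps (y : P) : FreeSumObj k (gc E) y →ₗ[k] E.V y :=
  lc (fun j : {j : gIdx E // gc E j ≤ y} => E.map j.2 (gv E j.1))

theorem eps_nat {y z : P} (h : y ≤ z) :
    (eps E z).comp (FreeSumMap k (gc E) h) = (E.map h).comp (eps E y) := by
  apply LinearMap.ext
  intro g
  simp only [LinearMap.comp_apply, eps, lc_apply, FSM_apply, map_sum, map_smul]
  have step1 : ∀ j : {j : gIdx E // gc E j ≤ z},
      (if h' : gc E j.1 ≤ y then g ⟨j.1, h'⟩ else 0) • E.map j.2 (gv E j.1)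
      = if h' : gc E j.1 ≤ y then g ⟨j.1, h'⟩ • E.map (h'.trans h) (gv E j.1) else 0 := by
    intro j
    by_cases h' : gc E j.1 ≤ y
    · rw [dif_pos h', dif_pos h']
    · rw [dif_neg h', dif_neg h', zero_smul]
  rw [Finset.sum_congr rfl (fun j _ => step1 j)]
  rw [sum_dite_subtype (k := k) (p := fun j => gc E j ≤ y) (q := fun j => gc E j ≤ z)
    (fun j hj => hj.trans h) (fun j => g j • E.map (j.2.trans h) (gv E j.1))]
  apply Finset.sum_congr rfl
  intro j _
  rw [← LinearMap.comp_apply, E.map_comp]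

theorem eps_range (y : P) : ∀ v : E.V y, v ∈ LinearMap.range (eps E y) := by
  have wf : WellFounded (fun z y : P => z ≤ y ∧ ¬ y ≤ z) :=
    @Finite.wellFounded_of_trans_of_irrefl P _ _
      ⟨fun a b c hab hbc => ⟨hab.1.trans hbc.1, fun h => hab.2 (hbc.1.trans h)⟩⟩
      ⟨fun a h => h.2 le_rfl⟩
  induction y using wf.induction with
  | _ y IH =>
  intro v
  -- everything strictly below is in the range
  have hb : Below E y ≤ LinearMap.range (eps E y) := by
    apply iSup_le
    rintro ⟨z, hz1, hz2⟩
    rintro _ ⟨u, rfl⟩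
    obtain ⟨g, rfl⟩ := IH z ⟨hz1, hz2⟩ u
    refine ⟨FreeSumMap k (gc E) hz1 g, ?_⟩
    rw [← LinearMap.comp_apply, eps_nat]
    rfl

  -- images of the complement at `r y` are in the range
  have hw : ∀ (hle : r y ≤ y) (w : ↥(Wc E (r y))),
      E.map hle (w : E.V (r y)) ∈ LinearMap.range (eps E y) := by
    intro hle w
    have hrep := Module.Basis.sum_repr (bas E (r y)) w
    have : (w : E.V (r y)) = ∑ i, ((bas E (r y)).repr w) i • ((bas E (r y)) i : E.V (r y)) := by
      rw [← hrep]
      push_cast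
      simp
    rw [this, map_sum]
    apply Submodule.sum_mem
    intro i _
    rw [map_smul]
    apply Submodule.smul_mem
    refine ⟨Pi.single ⟨⟨⟨r y, r_idem y⟩, i⟩, hle⟩ 1, ?_⟩
    rw [eps, lc_single]
    rw [one_smul]
    rfl
  -- conclude
  have h1 : y ≤ r y := (r_le y).2
  have h2 : r y ≤ y := (r_le y).1
  have hmem : E.map h1 v ∈ Below E (r y) ⊔ Wc E (r y) := by
    rw [(isCompl_Wc E (r y)).sup_eq_top]
    trivial
  obtain ⟨a, ha, w, hwm, hsum⟩ := Submodule.mem_sup.mp hmem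
  have hv : E.map h2 (E.map h1 v) = v := by
    rw [← LinearMap.comp_apply, E.map_comp]
    rw [show E.map (h1.trans h2) = LinearMap.id from E.map_id y]
    rfl
  have hva : E.map h2 a ∈ LinearMap.range (eps E y) := by
    apply hb
    have hmap : Submodule.map (E.map h2) (Below E (r y)) ≤ Below E y := by
      rw [Below, Submodule.map_iSup]
      apply iSup_le
      rintro ⟨z, hz1, hz2⟩
      rw [← LinearMap.range_comp, E.map_comp]
      exact le_iSup (fun z : {z : P // z ≤ y ∧ ¬ y ≤ z} => LinearMap.range (E.map z.2.1))
        ⟨z, hz1.trans h2, fun hc => hz2 (h2.trans hc)⟩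
    exact hmap (Submodule.mem_map_of_mem ha)
  have hvw : E.map h2 w ∈ LinearMap.range (eps E y) := hw h2 ⟨w, hwm⟩
  have : v = E.map h2 a + E.map h2 w := by
    rw [← map_add, hsum, hv]
  rw [this]
  exact Submodule.add_mem _ hva hvw

theorem eps_surj (y : P) : Function.Surjective (eps E y) := fun v => eps_range E y v

theorem cast_gv {a b : P} (hab : a = b) (i : Fin (nW E a)) (hle : a ≤ b) :
    E.map hle ((bas E a i : ↥(Wc E a)) : E.V a) = ((bas E b (hab ▸ i) : ↥(Wc E b)) : E.V b) := by
  subst hab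
  rw [show E.map hle = LinearMap.id from E.map_id a]
  rfl

theorem gIdx_ext {x : P} (t1 t2 : gIdx E) (h1 : t1.1.1 = r x) (h2 : t2.1.1 = r x)
    (hi : (h1 ▸ t1.2 : Fin (nW E (r x))) = h2 ▸ t2.2) : t1 = t2 := by
  obtain ⟨⟨a1, p1⟩, i1⟩ := t1
  obtain ⟨⟨a2, p2⟩, i2⟩ := t2
  simp only at h1 h2
  subst h1
  subst h2
  have : i1 = i2 := hi
  subst this
  rfl

theorem eps_inj (m : ℕ) (hm : ∀ z : P, ht z < m → Subsingleton (E.V z)) (x : P)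
    (hx : ht x ≤ m) : LinearMap.ker (eps E x) = ⊥ := by
  rw [LinearMap.ker_eq_bot']
  intro g hg
  -- every index contributing at `x` lies at the representative `r x`
  have key : ∀ j : {j : gIdx E // gc E j ≤ x}, j.1.1.1 = r x := by
    rintro ⟨⟨⟨a, pa⟩, i⟩, hj⟩
    simp only [gc] at hj
    by_cases hxa : x ≤ a
    · show a = r x
      exact pa.symm.trans (r_eq hj hxa)
    · exfalso
      have hsub : Subsingleton (E.V a) := hm a (lt_of_lt_of_le (ht_lt hj hxa) hx)
      have : Subsingleton ↥(Wc E a) := by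
        constructor; intro u v; exact Subtype.ext (Subsingleton.elim _ _)
      have hz : nW E a = 0 := by
        unfold nW
        rw [Module.finrank_zero_iff.mpr this]
      have hlt : (i : ℕ) < 0 := by
        rw [← hz]
        exact i.isLt
      omega
  have hxr : x ≤ r x := (r_le x).2
  -- map the relation into `E.V (r x)`
  have hg' : ∑ j : {j : gIdx E // gc E j ≤ x},
      g j • ((bas E (r x) ((key j) ▸ j.1.2) : ↥(Wc E (r x))) : E.V (r x)) = 0 := by
    have := congrArg (E.map hxr) hg
    rw [map_zero] at this
    rw [← this, eps, lc_apply, map_sum]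
    apply Finset.sum_congr rfl
    intro j _
    rw [map_smul, ← LinearMap.comp_apply, E.map_comp]
    congr 1
    exact (cast_gv E (key j) j.1.2 (j.2.trans hxr)).symm
  -- linear independence
  have hind : LinearIndependent k
      (fun i : Fin (nW E (r x)) => ((bas E (r x) i : ↥(Wc E (r x))) : E.V (r x))) :=
    (bas E (r x)).linearIndependent.map' (Wc E (r x)).subtype (Submodule.ker_subtype _)
  have hcomp : LinearIndependent k
      (fun j : {j : gIdx E // gc E j ≤ x} =>
        ((bas E (r x) ((key j) ▸ j.1.2) : ↥(Wc E (r x))) : E.V (r x))) := by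
    apply hind.comp
    intro j1 j2 hj
    exact Subtype.ext (gIdx_ext E j1.1 j2.1 (key j1) (key j2) hj)
  funext j
  exact Fintype.linearIndependent_iff.mp hcomp g hg' j

end CoverConstr

structure Cover (E : Rep k P) : Type (max u v (w + 1)) where
  γ : Type w
  [fin : Fintype γ]
  c : γ → P
  ε : ∀ y : P, FreeSumObj k c y →ₗ[k] E.V y
  nat : ∀ {y z : P} (h : y ≤ z), (ε z).comp (FreeSumMap k c h) = (E.map h).comp (ε y)
  surj : ∀ y, Function.Surjective (ε y)
  gen_ne : ∀ j : γ, ∃ v : E.V (c j), v ≠ 0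
  inj : ∀ m : ℕ, (∀ z, ht z < m → Subsingleton (E.V z)) → ∀ x, ht x ≤ m →
      LinearMap.ker (ε x) = ⊥

attribute [instance] Cover.fin

/-- the canonical cover, with index type in the universe of `P`. -/
noncomputable def mainCover (E : Rep k P) : Cover.{u, v, v} E where
  γ := gIdx E
  c := gc E
  ε := eps E
  nat := eps_nat E
  surj := eps_surj E
  gen_ne := fun j => ⟨gv E j, gv_ne E j⟩
  inj := eps_inj E

/-- reindexing a cover along an equivalence of index types. -/
noncomputable def reindexEquiv {γ : Type w} {γ' : Type w'} (q : γ' ≃ γ) (c : γ → P) (y : P) :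
    FreeSumObj k (c ∘ q) y ≃ₗ[k] FreeSumObj k c y where
  toFun g := fun j => g ⟨q.symm j.1, by
    show c (q (q.symm j.1)) ≤ y
    rw [Equiv.apply_symm_apply]; exact j.2⟩
  invFun g := fun j' => g ⟨q j'.1, j'.2⟩
  map_add' g1 g2 := rfl
  map_smul' a g := rfl
  left_inv g := by
    funext j'
    exact congrArg g (Subtype.ext (q.symm_apply_apply j'.1))
  right_inv g := by
    funext j
    exact congrArg g (Subtype.ext (q.apply_symm_apply j.1))

theorem reindexEquiv_nat {γ : Type w} {γ' : Type w'} (q : γ' ≃ γ) (c : γ → P) {y z : P}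
    (h : y ≤ z) :
    (FreeSumMap k c h).comp (reindexEquiv q c y).toLinearMap
      = (reindexEquiv q c z).toLinearMap.comp (FreeSumMap k (c ∘ q) h) := by
  ext g j
  show (if h' : c j.1 ≤ y then _ else 0) = FreeSumMap k (c ∘ q) h g ⟨q.symm j.1, _⟩
  rw [FSM_apply]
  have hc : (c ∘ q) (q.symm j.1) = c j.1 := by
    show c (q (q.symm j.1)) = c j.1
    rw [Equiv.apply_symm_apply]
  by_cases h' : c j.1 ≤ y
  · rw [dif_pos h', dif_pos (show (c ∘ q) (q.symm j.1) ≤ y from hc ▸ h')]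
    rfl
  · rw [dif_neg h', dif_neg (show ¬ (c ∘ q) (q.symm j.1) ≤ y from fun hcon => h' (hc ▸ hcon))]

/-- reindex a cover to have index type `Fin n`. -/
noncomputable def Cover.reindex {E : Rep k P} (C : Cover.{u, v, w} E) : Cover.{u, v, 0} E where
  γ := Fin (Fintype.card C.γ)
  c := C.c ∘ (Fintype.equivFin C.γ).symm
  ε y := (C.ε y).comp (reindexEquiv (Fintype.equivFin C.γ).symm C.c y).toLinearMap
  nat {y z} h := by
    rw [LinearMap.comp_assoc, ← reindexEquiv_nat, ← LinearMap.comp_assoc, C.nat h,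
      LinearMap.comp_assoc]
  surj y := (C.surj y).comp (reindexEquiv (Fintype.equivFin C.γ).symm C.c y).surjective
  gen_ne j := C.gen_ne ((Fintype.equivFin C.γ).symm j)
  inj m hm x hx := by
    rw [LinearMap.ker_comp, C.inj m hm x hx, Submodule.comap_bot, LinearEquiv.ker]

/-- the kernel of a cover, as a representation. -/
noncomputable def kerRep {E : Rep k P} (C : Cover.{u, v, 0} E) : Rep k P where
  V y := ↥(LinearMap.ker (C.ε y))
  map {y z} h := (FreeSumMap k C.c h).restrict (p := LinearMap.ker (C.ε y))
    (q := LinearMap.ker (C.ε z)) (fun v hv => by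
      rw [LinearMap.mem_ker, ← LinearMap.comp_apply, C.nat h]
      rw [LinearMap.mem_ker] at hv
      simp [hv])
  map_id y := by
    apply LinearMap.ext
    intro v
    apply Subtype.ext
    show FreeSumMap k C.c (le_refl y) v.1 = v.1
    rw [FSM_id]
    rfl
  map_comp {x y z} h1 h2 := by
    apply LinearMap.ext
    intro v
    apply Subtype.ext
    show FreeSumMap k C.c h2 (FreeSumMap k C.c h1 v.1) = FreeSumMap k C.c (h1.trans h2) v.1
    rw [← LinearMap.comp_apply, FSM_comp]

noncomputable def coverOf (E : Rep k P) : Cover.{u, v, 0} E := (mainCover E).reindex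

noncomputable def resSeq (E0 : Rep k P) : ℕ → Rep k P := fun n =>
  Nat.rec E0 (fun _ prev => kerRep (coverOf prev)) n

theorem resSeq_subsingleton (E0 : Rep k P) :
    ∀ i z, ht z < i → Subsingleton ((resSeq E0 i).V z) := by
  intro i
  induction i with
  | zero => intro z hz; omega
  | succ i IHi =>
    intro z hz
    have hker : LinearMap.ker ((coverOf (resSeq E0 i)).ε z) = ⊥ :=
      (coverOf (resSeq E0 i)).inj i IHi z (by omega)
    show Subsingleton ↥(LinearMap.ker ((coverOf (resSeq E0 i)).ε z))
    rw [hker]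
    infer_instance

end FFR

/-- Every `k`-linear representation `E` of a finite preordered set `P`, with all `E_x`
finite dimensional, admits a finite free resolution
`0 → F_n → ⋯ → F_0 → E → 0` where each `F_i` is a finite direct sum of free
representations `F^x`, `x ∈ P`.  (The resolution is encoded by an `ℕ`-indexed chain which
vanishes beyond level `n`.) -/
theorem finite_free_resolution (k : Type*) [Field k] (P : Type*) [Preorder P] [Fintype P]
    (V : P → Type*) [∀ x, AddCommGroup (V x)] [∀ x, Module k (V x)]
    [∀ x, FiniteDimensional k (V x)]
    (f : ∀ {x y : P}, x ≤ y → (V x →ₗ[k] V y))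
    (f_id : ∀ x : P, f (le_refl x) = LinearMap.id)
    (f_comp : ∀ {x y z : P} (h1 : x ≤ y) (h2 : y ≤ z),
      (f h2).comp (f h1) = f (h1.trans h2)) :
    ∃ (n : ℕ) (μ : ℕ → Type) (_ : ∀ i, Fintype (μ i)) (c : ∀ i, μ i → P)
      (d : ∀ (i : ℕ) (y : P), FreeSumObj k (c (i + 1)) y →ₗ[k] FreeSumObj k (c i) y)
      (ε : ∀ y : P, FreeSumObj k (c 0) y →ₗ[k] V y),
      (∀ i, n < i → IsEmpty (μ i)) ∧
      (∀ (i : ℕ) {y z : P} (h : y ≤ z),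
        (d i z).comp (FreeSumMap k (c (i + 1)) h) = (FreeSumMap k (c i) h).comp (d i y)) ∧
      (∀ {y z : P} (h : y ≤ z), (ε z).comp (FreeSumMap k (c 0) h) = (f h).comp (ε y)) ∧
      (∀ y, Function.Surjective (ε y)) ∧
      (∀ y, LinearMap.ker (ε y) = LinearMap.range (d 0 y)) ∧
      (∀ (i : ℕ) (y : P), LinearMap.ker (d i y) = LinearMap.range (d (i + 1) y)) := by
  classical
  let e : ∀ x : P, (Fin (Module.finrank k (V x)) → k) ≃ₗ[k] V x :=
    fun x => (Module.finBasis k (V x)).equivFun.symm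
  let E0 : FFR.Rep k P := {
    V := fun x => Fin (Module.finrank k (V x)) → k
    map := fun {x y} h => (e y).symm.toLinearMap.comp ((f h).comp (e x).toLinearMap)
    map_id := by
      intro x
      apply LinearMap.ext
      intro v
      simp [f_id]
    map_comp := by
      intro x y z h1 h2
      apply LinearMap.ext
      intro v
      simp only [LinearMap.comp_apply, LinearEquiv.coe_coe, LinearEquiv.apply_symm_apply]
      rw [← LinearMap.comp_apply (f h2), f_comp] }
  let C : ∀ i : ℕ, FFR.Cover (FFR.resSeq E0 i) := fun i => FFR.coverOf (FFR.resSeq E0 i)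
  refine ⟨Fintype.card P, fun i => (C i).γ, fun i => (C i).fin, fun i => (C i).c,
    fun i y => (LinearMap.ker ((C i).ε y)).subtype.comp ((C (i+1)).ε y),
    fun y => (e y).toLinearMap.comp ((C 0).ε y), ?_, ?_, ?_, ?_, ?_, ?_⟩
  · intro i hi
    refine ⟨fun j => ?_⟩
    obtain ⟨v, hv⟩ := (C i).gen_ne j
    have hs : Subsingleton ((FFR.resSeq E0 i).V ((C i).c j)) :=
      FFR.resSeq_subsingleton E0 i _ (lt_trans (FFR.ht_lt_card _) hi)
    exact hv (Subsingleton.elim v 0)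
  · intro i y z h
    apply LinearMap.ext
    intro g
    have hnat := LinearMap.congr_fun ((C (i+1)).nat h) g
    simp only [LinearMap.comp_apply] at hnat ⊢
    exact (congrArg (⇑(LinearMap.ker ((C i).ε z)).subtype) hnat).trans rfl
  · intro y z h
    apply LinearMap.ext
    intro g
    have hnat := LinearMap.congr_fun ((C 0).nat h) g
    simp only [LinearMap.comp_apply] at hnat ⊢
    refine Eq.trans (congrArg (⇑(e z)) hnat) ?_
    show (e z) (((e z).symm.toLinearMap.comp ((f h).comp (e y).toLinearMap)) ((C 0).ε y g))
      = f h ((e y) ((C 0).ε y g))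
    exact (e z).apply_symm_apply _
  · intro y v
    obtain ⟨u, hu⟩ := (C 0).surj y ((e y).symm v)
    refine ⟨u, ?_⟩
    simp only [LinearMap.comp_apply, LinearEquiv.coe_coe]
    exact (congrArg (⇑(e y)) hu).trans ((e y).apply_symm_apply v)
  · intro y
    beta_reduce
    erw [LinearMap.ker_comp,
      show LinearMap.ker (e y).toLinearMap = ⊥ from LinearEquiv.ker (e y),
      Submodule.comap_bot, LinearMap.range_comp,
      LinearMap.range_eq_top.mpr ((C (0+1)).surj y), Submodule.map_top,
      Submodule.range_subtype]
    rfl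
  · intro i y
    beta_reduce
    erw [LinearMap.ker_comp, Submodule.ker_subtype, Submodule.comap_bot,
      LinearMap.range_comp, LinearMap.range_eq_top.mpr ((C (i+1+1)).surj y),
      Submodule.map_top, Submodule.range_subtype]
    rfl
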